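/- arXiv:2405.07618 — 2 statements merged into one kernel-verified Lean document; each statement's English description precedes it below -/
import Mathlib

section
/- As |z| → ∞ with z ∈ T_B, the quantity |ρ(z, 𝐢)| tends to infinity; that is, for every M > 0 there exists R > 0 such that for all z ∈ T_B with |z| > R one has |ρ(z, 𝐢)| > M. -/
/- We model ℂ^(n+1) (the paper's ℂⁿ with n := n+1) as (Fin n → ℂ) × ℂ,
   writing z = (z', z_n).  All occurrences of the paper's dimension `n`
   therefore become `n + 1` below. -/

noncomputable section

open MeasureTheory Complex Set

/-- The ambient space ℂ^(n+1), split as (z', z_n). -/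
abbrev TubeC (n : ℕ) := (Fin n → ℂ) × ℂ

/-- ρ(z,w) = (1/4)((z'-conj w')·(z'-conj w') - 2i(z_n - conj w_n)). -/
def rhoK {n : ℕ} (z w : TubeC n) : ℂ :=
  (1/4 : ℂ) * ((∑ j, (z.1 j - (starRingEnd ℂ) (w.1 j)) ^ 2)
    - 2 * Complex.I * (z.2 - (starRingEnd ℂ) w.2))

/-- ρ(z) = Im z_n - |Im z'|². -/
def rhoR {n : ℕ} (z : TubeC n) : ℝ := z.2.im - ∑ j, (z.1 j).im ^ 2

/-- The tube domain T_B. -/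
def TB (n : ℕ) : Set (TubeC n) := {z | ∑ j, (z.1 j).im ^ 2 < z.2.im}

/-- Inverse hyperbolic tangent. -/
def artanh (x : ℝ) : ℝ := (1/2) * Real.log ((1 + x) / (1 - x))

/-- The Bergman distance on T_B. -/
def betaB {n : ℕ} (z w : TubeC n) : ℝ :=
  artanh (Real.sqrt (1 - rhoR z * rhoR w / (‖rhoK z w‖) ^ 2))

/-- The Bergman metric ball D(z,r). -/
def DB {n : ℕ} (z : TubeC n) (r : ℝ) : Set (TubeC n) := {w ∈ TB n | betaB z w < r}

/-- Euclidean norm of a point of ℂ^(n+1). -/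
def euclidNorm {n : ℕ} (z : TubeC n) : ℝ :=
  Real.sqrt ((∑ j, ‖z.1 j‖ ^ 2) + ‖z.2‖ ^ 2)

/-- The point 𝐢 = (0', i). -/
def iPt (n : ℕ) : TubeC n := (0, Complex.I)
/-- |ρ(z,𝐢)| → ∞ as |z| → ∞ within T_B. -/
theorem stmt_4 (n : ℕ) :
    ∀ M > (0 : ℝ), ∃ R > (0 : ℝ), ∀ z ∈ TB n,
      euclidNorm z > R → ‖rhoK z (iPt n)‖ > M := by
  intro M hM
  refine ⟨Real.sqrt (16*M^2 + 12*M + 2), Real.sqrt_pos.mpr (by positivity), ?_⟩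
  intro z hz hnorm
  by_contra hcon
  push_neg at hcon
  set A : ℂ := ∑ j, (z.1 j)^2 with hA
  set w : ℂ := A - 2*Complex.I*(z.2 + Complex.I) with hw
  have hrho : rhoK z (iPt n) = (1/4 : ℂ) * w := by
    simp [rhoK, iPt, hw, hA, Complex.conj_I, sub_neg_eq_add]
  have ht0 : 0 ≤ ‖w‖ := norm_nonneg w
  have habs : ‖w‖ ≤ 4 * M := by
    have h14 : ‖(1/4 : ℂ)‖ = 1/4 := by
      rw [norm_div]; simp
    rw [hrho, norm_mul, h14] at hcon
    linarith
  set t := ‖w‖ with ht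
  have hre : w.re = (∑ j, ((z.1 j).re * (z.1 j).re - (z.1 j).im * (z.1 j).im))
      + 2*z.2.im + 2 := by
    simp [hw, hA, Complex.add_re, Complex.sub_re, Complex.mul_re, Complex.mul_im,
      Complex.add_im, Complex.I_re, Complex.I_im, Complex.re_sum, pow_two]
    ring
  have hsum : (∑ j, ‖z.1 j‖^2)
      = ∑ j, ((z.1 j).re*(z.1 j).re + (z.1 j).im*(z.1 j).im) := by
    refine Finset.sum_congr rfl fun j _ => ?_
    rw [Complex.sq_norm, Complex.normSq_apply]
  have hTB : (∑ j, (z.1 j).im * (z.1 j).im) < z.2.im := by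
    simpa [TB, pow_two] using hz
  have h1 : (∑ j, ‖z.1 j‖^2) ≤ t := by
    have hle : (∑ j, ‖z.1 j‖^2) ≤ w.re := by
      rw [hsum, hre]
      have hsplit : ∑ j, ((z.1 j).re*(z.1 j).re + (z.1 j).im*(z.1 j).im)
          = (∑ j, (z.1 j).re*(z.1 j).re) + ∑ j, (z.1 j).im*(z.1 j).im :=
        Finset.sum_add_distrib
      have hsplit2 : ∑ j, ((z.1 j).re*(z.1 j).re - (z.1 j).im*(z.1 j).im)
          = (∑ j, (z.1 j).re*(z.1 j).re) - ∑ j, (z.1 j).im*(z.1 j).im :=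
        Finset.sum_sub_distrib _ _
      linarith
    exact hle.trans (Complex.re_le_norm w)
  have hAabs : ‖A‖ ≤ t := by
    calc ‖A‖ ≤ ∑ j, ‖(z.1 j)^2‖ :=
          norm_sum_le _ _
      _ = ∑ j, ‖z.1 j‖^2 := by
          refine Finset.sum_congr rfl fun j _ => ?_
          rw [norm_pow]
      _ ≤ t := h1
  have hz2 : ‖z.2‖ ≤ t + 1 := by
    have he : (2:ℂ)*Complex.I*z.2 = A + 2 - w := by
      rw [hw]; linear_combination (-2:ℂ)*Complex.I_sq
    have h2 : 2 * ‖z.2‖ = ‖A + 2 - w‖ := by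
      rw [← he, norm_mul, norm_mul]
      simp
    have h3 : ‖A + 2 - w‖ ≤ ‖A‖ + 2 + ‖w‖ := by
      calc ‖A + 2 - w‖ ≤ ‖A + 2‖ + ‖w‖ := by
            simpa using norm_sub_le (A + 2) w
        _ ≤ ‖A‖ + ‖(2:ℂ)‖ + ‖w‖ := by
            have := norm_add_le A 2
            linarith
        _ = ‖A‖ + 2 + ‖w‖ := by norm_num
    linarith
  have hS : (∑ j, ‖z.1 j‖^2) + ‖z.2‖ ^ 2
      ≤ 16*M^2 + 12*M + 2 := by
    have hz2sq : ‖z.2‖ ^ 2 ≤ (t+1)^2 := by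
      have : (0:ℝ) ≤ ‖z.2‖ := norm_nonneg _
      nlinarith
    nlinarith
  have : euclidNorm z ≤ Real.sqrt (16*M^2 + 12*M + 2) := by
    unfold euclidNorm
    exact Real.sqrt_le_sqrt hS
  linarith
end
end

section
/- (Khinchine's inequality) For each 0 < p < ∞ there exist constants 0 < A_p ≤ B_p < ∞ such that for every m ∈ ℕ and all complex numbers c₁, …, c_m, A_p (Σ_{j=1}^m |c_j|²)^{p/2} ≤ ∫_0^1 |Σ_{j=1}^m c_j r_j(t)|^p dt ≤ B_p (Σ_{j=1}^m |c_j|²)^{p/2}, where r_j are the Rademacher functions. -/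
/- We model ℂ^(n+1) (the paper's ℂⁿ with n := n+1) as (Fin n → ℂ) × ℂ,
   writing z = (z', z_n).  All occurrences of the paper's dimension `n`
   therefore become `n + 1` below. -/

noncomputable section

open MeasureTheory Complex Set

/-- The Rademacher functions: r₀(t) = 1 if 0 ≤ t - ⌊t⌋ < 1/2, -1 otherwise;
r_j(t) = r₀(2^j t). -/
def rademacher (j : ℕ) (t : ℝ) : ℝ :=
  if Int.fract ((2 : ℝ) ^ j * t) < 1 / 2 then 1 else -1

namespace Stmt19
open Finset intervalIntegral

def sgn (b : Fin 2) : ℝ := if b = 0 then 1 else -1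

def flip2 (b : Fin 2) : Fin 2 := if b = 0 then 1 else 0

lemma sgn_flip2 (b : Fin 2) : sgn (flip2 b) = - sgn b := by
  fin_cases b <;> simp [sgn, flip2]

lemma flip2_flip2 (b : Fin 2) : flip2 (flip2 b) = b := by fin_cases b <;> simp [flip2]

lemma flip2_ne (b : Fin 2) : flip2 b ≠ b := by fin_cases b <;> simp [flip2]

lemma sgn_sq (b : Fin 2) : sgn b * sgn b = 1 := by fin_cases b <;> simp [sgn]

lemma orth {m : ℕ} (j k : Fin m) (hjk : j ≠ k) :
    ∑ σ : Fin m → Fin 2, sgn (σ j) * sgn (σ k) = 0 := by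
  classical
  apply Finset.sum_ninvolution (fun σ => Function.update σ j (flip2 (σ j)))
  · intro σ
    have h1 : Function.update σ j (flip2 (σ j)) j = flip2 (σ j) := Function.update_self _ _ _
    have h2 : Function.update σ j (flip2 (σ j)) k = σ k := Function.update_of_ne (Ne.symm hjk) _ _
    rw [h1, h2, sgn_flip2]
    ring
  · intro σ _
    intro h
    have := congrFun h j
    rw [Function.update_self] at this
    exact flip2_ne (σ j) this
  · intro σ; exact Finset.mem_univ _
  · intro σ
    funext i
    by_cases hi : i = j
    · subst hi; simp [Function.update_self, flip2_flip2]
    · simp [Function.update_of_ne hi]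

lemma orth' {m : ℕ} (j k : Fin m) :
    ∑ σ : Fin m → Fin 2, sgn (σ j) * sgn (σ k)
      = if j = k then (2:ℝ)^m else 0 := by
  by_cases h : j = k
  · subst h
    simp only [if_pos rfl]
    rw [Finset.sum_congr rfl (fun σ _ => sgn_sq (σ j))]
    simp [Finset.card_univ, Fintype.card_fun]
  · rw [if_neg h]; exact orth j k h

/-- second moment, real coefficients -/
lemma sq_sum {m : ℕ} (a : Fin m → ℝ) :
    ∑ σ : Fin m → Fin 2, (∑ j, a j * sgn (σ j)) ^ 2
      = 2^m * ∑ j, (a j)^2 := by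
  classical
  have expand : ∀ σ : Fin m → Fin 2, (∑ j, a j * sgn (σ j)) ^ 2
      = ∑ j, ∑ k, (a j * a k) * (sgn (σ j) * sgn (σ k)) := by
    intro σ
    rw [sq, Finset.sum_mul_sum]
    apply Finset.sum_congr rfl; intro j _
    apply Finset.sum_congr rfl; intro k _
    ring
  rw [Finset.sum_congr rfl (fun σ _ => expand σ)]
  rw [Finset.sum_comm]
  have : ∀ j : Fin m, ∑ σ : Fin m → Fin 2, ∑ k, (a j * a k) * (sgn (σ j) * sgn (σ k))
      = 2^m * (a j)^2 := by
    intro j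
    rw [Finset.sum_comm]
    have : ∀ k : Fin m, ∑ σ : Fin m → Fin 2, (a j * a k) * (sgn (σ j) * sgn (σ k))
        = if j = k then 2^m * (a j)^2 else 0 := by
      intro k
      rw [← Finset.mul_sum, orth' j k]
      by_cases h : j = k
      · subst h; simp [sq]; ring
      · simp [h]
    rw [Finset.sum_congr rfl (fun k _ => this k)]
    simp
  rw [Finset.sum_congr rfl (fun j _ => this j), ← Finset.mul_sum]

def D (k : ℕ) : ℝ := (Nat.factorial (2*k)) / (2^k * Nat.factorial k)

lemma D_pos (k : ℕ) : 0 < D k := by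
  unfold D
  positivity

lemma two_pow_fac_le (i : ℕ) : 2^i * Nat.factorial i ≤ Nat.factorial (2*i) := by
  induction i with
  | zero => simp
  | succ n ih =>
    have h : 2*(n+1) = (2*n+1)+1 := by ring
    rw [h, Nat.factorial_succ]
    calc 2^(n+1) * Nat.factorial (n+1)
        = (n+1) * 2 * (2^n * Nat.factorial n) := by rw [Nat.factorial_succ]; ring
      _ ≤ (n+1) * 2 * Nat.factorial (2*n) := by
          exact Nat.mul_le_mul_left _ ih
      _ ≤ ((2*n+1)+1) * ((2*n+1) * Nat.factorial (2*n)) := by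
          have h1 : (n+1)*2 ≤ (2*n+1)+1 := by omega
          have h2 : Nat.factorial (2*n) ≤ (2*n+1) * Nat.factorial (2*n) :=
            Nat.le_mul_of_pos_left _ (by omega)
          exact Nat.mul_le_mul h1 h2

lemma nat_coef (k i : ℕ) (h : i ≤ k) :
    Nat.choose (2*k) (2*i) * Nat.factorial (2*(k-i)) * (2^k * Nat.factorial k)
      ≤ Nat.factorial (2*k) * Nat.choose k i * (2^(k-i) * Nat.factorial (k-i)) := by
  have hid : Nat.choose (2*k) (2*i) * Nat.factorial (2*i) * Nat.factorial (2*(k-i))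
      = Nat.factorial (2*k) := by
    have h2 : 2*i ≤ 2*k := by omega
    have := Nat.choose_mul_factorial_mul_factorial h2
    have he : 2*k - 2*i = 2*(k-i) := by omega
    rw [he] at this
    exact this
  have hkfac : Nat.choose k i * Nat.factorial i * Nat.factorial (k-i) = Nat.factorial k :=
    Nat.choose_mul_factorial_mul_factorial h
  have h2pow : (2:ℕ)^k = 2^i * 2^(k-i) := by
    rw [← pow_add]; congr 1; omega
  calc Nat.choose (2*k) (2*i) * Nat.factorial (2*(k-i)) * (2^k * Nat.factorial k)
      = (Nat.choose (2*k) (2*i) * (2^i * Nat.factorial i) * Nat.factorial (2*(k-i)))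
          * (Nat.choose k i * (2^(k-i) * Nat.factorial (k-i))) := by
        rw [h2pow, ← hkfac]; ring
    _ ≤ (Nat.choose (2*k) (2*i) * Nat.factorial (2*i) * Nat.factorial (2*(k-i)))
          * (Nat.choose k i * (2^(k-i) * Nat.factorial (k-i))) := by
        apply Nat.mul_le_mul_right
        apply Nat.mul_le_mul_right
        exact Nat.mul_le_mul_left _ (two_pow_fac_le i)
    _ = Nat.factorial (2*k) * Nat.choose k i * (2^(k-i) * Nat.factorial (k-i)) := by
        rw [hid]; ring

lemma coef (k i : ℕ) (h : i ≤ k) :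
    (Nat.choose (2*k) (2*i) : ℝ) * D (k-i) ≤ D k * Nat.choose k i := by
  unfold D
  rw [← mul_div_assoc, div_mul_eq_mul_div, div_le_div_iff₀ (by positivity) (by positivity)]
  have h2 := nat_coef k i h
  have h3 : (↑(Nat.choose (2*k) (2*i) * Nat.factorial (2*(k-i)) * (2^k * Nat.factorial k)) : ℝ)
      ≤ ↑(Nat.factorial (2*k) * Nat.choose k i * (2^(k-i) * Nat.factorial (k-i))) :=
    Nat.cast_le.2 h2
  push_cast at h3
  calc (Nat.choose (2*k) (2*i) : ℝ) * Nat.factorial (2*(k-i)) * (2^k * Nat.factorial k)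
      = (Nat.choose (2*k) (2*i) : ℝ) * Nat.factorial (2*(k-i)) * (2^k * Nat.factorial k) := rfl
    _ ≤ (Nat.factorial (2*k) : ℝ) * Nat.choose k i * (2^(k-i) * Nat.factorial (k-i)) := by
        nlinarith [h3]
    _ = (Nat.factorial (2*k) : ℝ) * Nat.choose k i * (2^(k-i) * Nat.factorial (k-i)) := rfl

lemma even_binom (k : ℕ) (t a : ℝ) :
    (t+a)^(2*k) + (t-a)^(2*k)
      = 2 * ∑ i ∈ range (k+1), (Nat.choose (2*k) (2*i) : ℝ) * t^(2*(k-i)) * a^(2*i) := by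
  have h1 : (t+a)^(2*k) = ∑ j ∈ range (2*k+1), t^j * a^(2*k-j) * (Nat.choose (2*k) j : ℝ) :=
    add_pow t a (2*k)
  have h2 : (t-a)^(2*k) = ∑ j ∈ range (2*k+1), t^j * (-a)^(2*k-j) * (Nat.choose (2*k) j : ℝ) := by
    rw [sub_eq_add_neg]; exact add_pow t (-a) (2*k)
  rw [h1, h2, ← Finset.sum_add_distrib]
  have key : ∀ j ∈ range (2*k+1),
      t^j * a^(2*k-j) * (Nat.choose (2*k) j : ℝ) + t^j * (-a)^(2*k-j) * (Nat.choose (2*k) j : ℝ)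
      = if Even j then 2 * (t^j * a^(2*k-j) * (Nat.choose (2*k) j : ℝ)) else 0 := by
    intro j hj
    rw [Finset.mem_range] at hj
    have hj' : j ≤ 2*k := by omega
    have hpar : Even (2*k - j) ↔ Even j := by
      rw [Nat.even_sub hj']
      simp [Nat.even_mul]
    by_cases hev : Even j
    · have : Even (2*k-j) := hpar.2 hev
      rw [this.neg_pow]
      rw [if_pos hev]; ring
    · have : ¬ Even (2*k-j) := fun h => hev (hpar.1 h)
      have hodd : Odd (2*k-j) := Nat.not_even_iff_odd.1 this
      rw [hodd.neg_pow]
      rw [if_neg hev]; ring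
  rw [Finset.sum_congr rfl key]
  have himg : ∑ j ∈ range (2*k+1),
        (if Even j then 2 * (t^j * a^(2*k-j) * (Nat.choose (2*k) j : ℝ)) else 0)
      = ∑ i ∈ (range (k+1)).image (fun i => 2*i),
        (if Even i then 2 * (t^i * a^(2*k-i) * (Nat.choose (2*k) i : ℝ)) else 0) := by
    symm
    apply Finset.sum_subset
    · intro x hx
      rw [Finset.mem_image] at hx
      obtain ⟨i, hi, rfl⟩ := hx
      rw [Finset.mem_range] at hi ⊢
      omega
    · intro x hx hnx
      rw [if_neg]
      intro hev
      obtain ⟨i, rfl⟩ := hev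
      apply hnx
      rw [Finset.mem_image]
      rw [Finset.mem_range] at hx
      exact ⟨i, Finset.mem_range.2 (by omega), by omega⟩
  rw [himg, Finset.sum_image (by intro x _ y _ hxy; exact Nat.eq_of_mul_eq_mul_left (by norm_num) hxy)]
  have step : ∀ i ∈ range (k+1),
      (if Even (2*i) then 2 * (t^(2*i) * a^(2*k-2*i) * (Nat.choose (2*k) (2*i) : ℝ)) else 0)
      = 2 * (t^(2*i) * a^(2*(k-i)) * (Nat.choose (2*k) (2*i) : ℝ)) := by
    intro i hi
    rw [Finset.mem_range] at hi
    rw [if_pos (even_two_mul i)]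
    have : 2*k - 2*i = 2*(k-i) := by omega
    rw [this]
  rw [Finset.sum_congr rfl step, ← Finset.mul_sum]
  congr 1
  conv_rhs => rw [← Finset.sum_range_reflect]
  apply Finset.sum_congr rfl
  intro j hj
  rw [Finset.mem_range] at hj
  have e1 : k + 1 - 1 - j = k - j := by omega
  rw [e1]
  have e2 : k - (k - j) = j := by omega
  rw [e2]
  have e3 : 2*(k-j) = 2*k - 2*j := by omega
  rw [e3, Nat.choose_symm (by omega : 2*j ≤ 2*k)]
  ring

lemma sum_sq_nonneg {m : ℕ} (a : Fin m → ℝ) : 0 ≤ ∑ j, (a j)^2 :=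
  Finset.sum_nonneg (fun j _ => sq_nonneg _)

lemma moment_real : ∀ (m k : ℕ) (a : Fin m → ℝ),
    ∑ σ : Fin m → Fin 2, (∑ j, a j * sgn (σ j)) ^ (2*k)
      ≤ 2^m * (D k * (∑ j, (a j)^2) ^ k) := by
  intro m
  induction m with
  | zero =>
    intro k a
    have h0 : ∀ σ : Fin 0 → Fin 2, (∑ j, a j * sgn (σ j)) = 0 := fun σ => by simp
    rw [Finset.sum_congr rfl (fun σ _ => by rw [h0 σ])]
    rw [Finset.sum_const]
    have hcard : (Finset.univ : Finset (Fin 0 → Fin 2)).card = 1 := by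
      rw [Finset.card_univ]; simp [Fintype.card_fun]
    have hsum0 : (∑ j : Fin 0, (a j)^2) = 0 := by simp
    rw [hcard, hsum0, one_smul, pow_zero, one_mul]
    cases k with
    | zero => norm_num [D, Nat.factorial]
    | succ n =>
      rw [zero_pow (by omega : 2*(n+1) ≠ 0), zero_pow (Nat.succ_ne_zero n)]
      simp
  | succ m ih =>
    intro k a
    rw [← Equiv.sum_comp (Fin.consEquiv (fun _ => Fin 2))]
    rw [Fintype.sum_prod_type]
    set Y : (Fin m → Fin 2) → ℝ := fun σ => ∑ j : Fin m, a j.succ * sgn (σ j) with hY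
    set T : ℝ := ∑ j : Fin m, (a j.succ)^2 with hT
    have hT0 : 0 ≤ T := Finset.sum_nonneg (fun j _ => sq_nonneg _)
    have hsplit : ∀ (b : Fin 2) (σ' : Fin m → Fin 2),
        (∑ j : Fin (m+1), a j * sgn ((Fin.consEquiv (fun _ => Fin 2)) (b, σ') j))
          = a 0 * sgn b + Y σ' := by
      intro b σ'
      rw [Fin.sum_univ_succ]
      simp only [Fin.consEquiv_apply, Fin.cons_zero, Fin.cons_succ, hY]
    rw [Finset.sum_comm]
    have key : ∀ σ' : Fin m → Fin 2,
        (∑ b : Fin 2, (∑ j : Fin (m+1),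
            a j * sgn ((Fin.consEquiv (fun _ => Fin 2)) (b, σ') j)) ^ (2*k))
        = 2 * ∑ i ∈ range (k+1),
            (Nat.choose (2*k) (2*i) : ℝ) * (Y σ')^(2*(k-i)) * (a 0)^(2*i) := by
      intro σ'
      rw [Finset.sum_congr rfl (fun b _ => by rw [hsplit b σ'])]
      rw [Fin.sum_univ_two]
      rw [show a 0 * sgn 0 + Y σ' = Y σ' + a 0 by simp [sgn]; ring]
      rw [show a 0 * sgn 1 + Y σ' = Y σ' - a 0 by simp [sgn]; ring]
      exact even_binom k (Y σ') (a 0)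
    rw [Finset.sum_congr rfl (fun σ' _ => key σ')]
    rw [← Finset.mul_sum, Finset.sum_comm]
    have step1 : ∀ i ∈ range (k+1),
        ∑ σ' : Fin m → Fin 2, (Nat.choose (2*k) (2*i) : ℝ) * (Y σ')^(2*(k-i)) * (a 0)^(2*i)
        ≤ (Nat.choose (2*k) (2*i) : ℝ) * (a 0)^(2*i) * (2^m * (D (k-i) * T^(k-i))) := by
      intro i _
      have : ∑ σ' : Fin m → Fin 2, (Nat.choose (2*k) (2*i) : ℝ) * (Y σ')^(2*(k-i)) * (a 0)^(2*i)
          = (Nat.choose (2*k) (2*i) : ℝ) * (a 0)^(2*i) * ∑ σ' : Fin m → Fin 2, (Y σ')^(2*(k-i)) := by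
        rw [Finset.mul_sum]
        exact Finset.sum_congr rfl (fun σ' _ => by ring)
      rw [this]
      have ha0 : (0:ℝ) ≤ (Nat.choose (2*k) (2*i) : ℝ) * (a 0)^(2*i) :=
        mul_nonneg (Nat.cast_nonneg _) (by rw [pow_mul]; positivity)
      exact mul_le_mul_of_nonneg_left (ih (k-i) (fun j => a j.succ)) ha0
    calc 2 * ∑ i ∈ range (k+1), ∑ σ' : Fin m → Fin 2,
            (Nat.choose (2*k) (2*i) : ℝ) * (Y σ')^(2*(k-i)) * (a 0)^(2*i)
        ≤ 2 * ∑ i ∈ range (k+1),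
            (Nat.choose (2*k) (2*i) : ℝ) * (a 0)^(2*i) * (2^m * (D (k-i) * T^(k-i))) := by
          apply mul_le_mul_of_nonneg_left (Finset.sum_le_sum step1) (by norm_num)
      _ ≤ 2 * ∑ i ∈ range (k+1),
            (D k * (Nat.choose k i : ℝ)) * (a 0)^(2*i) * (2^m * T^(k-i)) := by
          apply mul_le_mul_of_nonneg_left _ (by norm_num)
          apply Finset.sum_le_sum
          intro i hi
          rw [Finset.mem_range] at hi
          have hc := coef k i (by omega)
          have hnn : (0:ℝ) ≤ (a 0)^(2*i) * (2^m * T^(k-i)) :=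
            mul_nonneg (by rw [pow_mul]; positivity) (by positivity)
          calc (Nat.choose (2*k) (2*i) : ℝ) * (a 0)^(2*i) * (2^m * (D (k-i) * T^(k-i)))
              = ((Nat.choose (2*k) (2*i) : ℝ) * D (k-i)) * ((a 0)^(2*i) * (2^m * T^(k-i))) := by
                ring
            _ ≤ (D k * (Nat.choose k i : ℝ)) * ((a 0)^(2*i) * (2^m * T^(k-i))) :=
                mul_le_mul_of_nonneg_right hc hnn
            _ = (D k * (Nat.choose k i : ℝ)) * (a 0)^(2*i) * (2^m * T^(k-i)) := by ring
      _ = 2^(m+1) * (D k * ∑ i ∈ range (k+1), ((a 0)^2)^i * T^(k-i) * (Nat.choose k i : ℝ)) := by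
          rw [Finset.mul_sum, Finset.mul_sum, Finset.mul_sum]
          apply Finset.sum_congr rfl
          intro i _
          rw [pow_mul]
          ring
      _ = 2^(m+1) * (D k * ((a 0)^2 + T)^k) := by rw [add_pow]
      _ = 2^(m+1) * (D k * (∑ j : Fin (m+1), (a j)^2) ^ k) := by
          rw [Fin.sum_univ_succ]

lemma max_pow_le (k : ℕ) (x y : ℝ) (hx : 0 ≤ x) (hy : 0 ≤ y) :
    (max x y)^k ≤ x^k + y^k := by
  cases le_total x y with
  | inl h => rw [max_eq_right h]; exact le_add_of_nonneg_left (pow_nonneg hx k)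
  | inr h => rw [max_eq_left h]; exact le_add_of_nonneg_right (pow_nonneg hy k)

lemma two_pow_bound (k : ℕ) (x y : ℝ) (hx : 0 ≤ x) (hy : 0 ≤ y) :
    (x+y)^k ≤ 2^k * (x^k + y^k) := by
  calc (x+y)^k ≤ (2 * max x y)^k := by
        apply pow_le_pow_left₀ (by positivity)
        cases le_total x y with
        | inl h => rw [max_eq_right h]; linarith
        | inr h => rw [max_eq_left h]; linarith
    _ = 2^k * (max x y)^k := by rw [mul_pow]
    _ ≤ 2^k * (x^k + y^k) :=
        mul_le_mul_of_nonneg_left (max_pow_le k x y hx hy) (by positivity)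

lemma moment_complex (m k : ℕ) (c : Fin m → ℂ) :
    ∑ σ : Fin m → Fin 2, ‖∑ j, c j * (sgn (σ j) : ℂ)‖ ^ (2*k)
      ≤ 2^m * ((2^(k+1) * D k) * (∑ j, ‖c j‖^2) ^ k) := by
  set S : ℝ := ∑ j, ‖c j‖^2 with hS
  have hS0 : 0 ≤ S := Finset.sum_nonneg (fun j _ => by positivity)
  have hre : ∀ σ : Fin m → Fin 2, (∑ j, c j * (sgn (σ j) : ℂ)).re
      = ∑ j, (c j).re * sgn (σ j) := by
    intro σ
    rw [Complex.re_sum]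
    exact Finset.sum_congr rfl (fun j _ => by simp [Complex.mul_re])
  have him : ∀ σ : Fin m → Fin 2, (∑ j, c j * (sgn (σ j) : ℂ)).im
      = ∑ j, (c j).im * sgn (σ j) := by
    intro σ
    rw [Complex.im_sum]
    exact Finset.sum_congr rfl (fun j _ => by simp [Complex.mul_im])
  have pertermb : ∀ σ : Fin m → Fin 2,
      ‖∑ j, c j * (sgn (σ j) : ℂ)‖ ^ (2*k)
      ≤ 2^k * ((∑ j, (c j).re * sgn (σ j))^(2*k) + (∑ j, (c j).im * sgn (σ j))^(2*k)) := by
    intro σ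
    set X := ∑ j, c j * (sgn (σ j) : ℂ) with hX
    have h1 : ‖X‖ ^ (2*k) = (X.re^2 + X.im^2)^k := by
      rw [pow_mul, Complex.sq_norm, Complex.normSq_apply]
      ring_nf
    rw [h1, hre σ, him σ]
    calc ((∑ j, (c j).re * sgn (σ j))^2 + (∑ j, (c j).im * sgn (σ j))^2)^k
        ≤ 2^k * (((∑ j, (c j).re * sgn (σ j))^2)^k + ((∑ j, (c j).im * sgn (σ j))^2)^k) :=
          two_pow_bound k _ _ (sq_nonneg _) (sq_nonneg _)
      _ = 2^k * ((∑ j, (c j).re * sgn (σ j))^(2*k) + (∑ j, (c j).im * sgn (σ j))^(2*k)) := by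
          rw [← pow_mul, ← pow_mul]
  calc ∑ σ : Fin m → Fin 2, ‖∑ j, c j * (sgn (σ j) : ℂ)‖ ^ (2*k)
      ≤ ∑ σ : Fin m → Fin 2, 2^k * ((∑ j, (c j).re * sgn (σ j))^(2*k)
          + (∑ j, (c j).im * sgn (σ j))^(2*k)) := Finset.sum_le_sum (fun σ _ => pertermb σ)
    _ = 2^k * ((∑ σ : Fin m → Fin 2, (∑ j, (c j).re * sgn (σ j))^(2*k))
          + ∑ σ : Fin m → Fin 2, (∑ j, (c j).im * sgn (σ j))^(2*k)) := by
        rw [← Finset.mul_sum, Finset.sum_add_distrib]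
    _ ≤ 2^k * ((2^m * (D k * (∑ j, ((c j).re)^2)^k)) + 2^m * (D k * (∑ j, ((c j).im)^2)^k)) := by
        apply mul_le_mul_of_nonneg_left _ (by positivity)
        exact add_le_add (moment_real m k (fun j => (c j).re)) (moment_real m k (fun j => (c j).im))
    _ ≤ 2^k * ((2^m * (D k * S^k)) + 2^m * (D k * S^k)) := by
        apply mul_le_mul_of_nonneg_left _ (by positivity)
        have hre2 : ∑ j, ((c j).re)^2 ≤ S := by
          apply Finset.sum_le_sum
          intro j _
          rw [Complex.sq_norm, Complex.normSq_apply]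
          nlinarith [sq_nonneg ((c j).im)]
        have him2 : ∑ j, ((c j).im)^2 ≤ S := by
          apply Finset.sum_le_sum
          intro j _
          rw [Complex.sq_norm, Complex.normSq_apply]
          nlinarith [sq_nonneg ((c j).re)]
        have hrn : 0 ≤ ∑ j, ((c j).re)^2 := Finset.sum_nonneg (fun j _ => sq_nonneg _)
        have hin : 0 ≤ ∑ j, ((c j).im)^2 := Finset.sum_nonneg (fun j _ => sq_nonneg _)
        have hD := (D_pos k).le
        have h1 : 2^m * (D k * (∑ j, ((c j).re)^2)^k) ≤ 2^m * (D k * S^k) := by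
          apply mul_le_mul_of_nonneg_left _ (by positivity)
          exact mul_le_mul_of_nonneg_left (pow_le_pow_left₀ hrn hre2 k) hD
        have h2 : 2^m * (D k * (∑ j, ((c j).im)^2)^k) ≤ 2^m * (D k * S^k) := by
          apply mul_le_mul_of_nonneg_left _ (by positivity)
          exact mul_le_mul_of_nonneg_left (pow_le_pow_left₀ hin him2 k) hD
        linarith
    _ = 2^m * ((2^(k+1) * D k) * S^k) := by ring

lemma fract_lt_half (e : ℕ) (he : 1 ≤ e) (b : ℕ) (x : ℝ)
    (hx : (b:ℝ)/2^e ≤ x) (hx' : x < ((b:ℝ)+1)/2^e) :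
    (Int.fract x < 1/2 ↔ b % 2^e < 2^(e-1)) := by
  set a : ℕ := b / 2^e with ha
  set r : ℕ := b % 2^e with hr
  have hb : b = 2^e * a + r := (Nat.div_add_mod b (2^e)).symm
  have hrlt : r < 2^e := Nat.mod_lt _ (by positivity)
  have hE : (0:ℝ) < 2^e := by positivity
  have hbR : (b:ℝ) = 2^e * a + r := by exact_mod_cast congrArg (Nat.cast : ℕ → ℝ) hb
  have hfloor : ⌊x⌋ = (a : ℤ) := by
    rw [Int.floor_eq_iff]
    push_cast
    constructor
    · calc (a:ℝ) ≤ a + r/2^e := le_add_of_nonneg_right (by positivity)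
        _ = (2^e * a + r)/2^e := by field_simp
        _ = (b:ℝ)/2^e := by rw [hbR]
        _ ≤ x := hx
    · calc x < ((b:ℝ)+1)/2^e := hx'
        _ = a + ((r:ℝ)+1)/2^e := by rw [hbR]; field_simp; ring
        _ ≤ a + 1 := by
            have : ((r:ℝ)+1)/2^e ≤ 1 := by
              rw [div_le_one hE]
              have : (r:ℝ)+1 ≤ 2^e := by
                have : (r+1 : ℕ) ≤ 2^e := hrlt
                exact_mod_cast this
              linarith
            linarith
  have hfract : Int.fract x = x - a := by
    rw [Int.fract, hfloor]
    push_cast; ring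
  have h2e : (2:ℝ)^e = 2 * 2^(e-1) := by
    rw [← pow_succ']
    congr 1
    omega
  constructor
  · intro h
    by_contra hc
    push_neg at hc
    have hge : ((2:ℝ)^(e-1)) ≤ r := by exact_mod_cast hc
    have : (1:ℝ)/2 ≤ Int.fract x := by
      rw [hfract]
      have : (r:ℝ)/2^e ≤ x - a := by
        have hxa : (2^e * a + r)/2^e ≤ x := by rw [← hbR]; exact hx
        have : (a:ℝ) + r/2^e ≤ x := by
          calc (a:ℝ) + r/2^e = (2^e * a + r)/2^e := by field_simp
            _ ≤ x := hxa
        linarith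
      have h12 : (1:ℝ)/2 ≤ (r:ℝ)/2^e := by
        rw [div_le_div_iff₀ (by norm_num) hE, h2e]
        nlinarith [hge]
      linarith
    linarith
  · intro h
    have hlt : ((r:ℝ)+1) ≤ 2^(e-1) := by
      have : (r+1 : ℕ) ≤ 2^(e-1) := h
      exact_mod_cast this
    rw [hfract]
    have hxu : x - a < ((r:ℝ)+1)/2^e := by
      have : x < a + ((r:ℝ)+1)/2^e := by
        calc x < ((b:ℝ)+1)/2^e := hx'
          _ = a + ((r:ℝ)+1)/2^e := by rw [hbR]; field_simp; ring
      linarith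
    have : ((r:ℝ)+1)/2^e ≤ 1/2 := by
      rw [div_le_div_iff₀ hE (by norm_num), h2e]
      nlinarith [hlt]
    linarith

lemma rad_eq (m : ℕ) (j : ℕ) (hj : j < m) (s : ℕ) (t : ℝ)
    (ht : (s:ℝ)/2^(m+1) ≤ t) (ht' : t < ((s:ℝ)+1)/2^(m+1)) :
    rademacher (j+1) t = (if s % 2^(m-j) < 2^(m-j-1) then 1 else -1) := by
  unfold rademacher
  have hpow : (2:ℝ)^(j+1) * 2^(m-j) = 2^(m+1) := by
    rw [← pow_add]
    congr 1
    omega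
  have h2j : (0:ℝ) < 2^(j+1) := by positivity
  have hx : (s:ℝ)/2^(m-j) ≤ 2^(j+1) * t := by
    rw [div_le_iff₀ (by positivity)]
    calc (s:ℝ) = (s/2^(m+1)) * 2^(m+1) := by field_simp
      _ ≤ t * 2^(m+1) := by
          apply mul_le_mul_of_nonneg_right ht (by positivity)
      _ = 2^(j+1) * t * 2^(m-j) := by rw [← hpow]; ring
  have hx' : 2^(j+1) * t < ((s:ℝ)+1)/2^(m-j) := by
    rw [lt_div_iff₀ (by positivity)]
    calc 2^(j+1) * t * 2^(m-j) = t * 2^(m+1) := by rw [← hpow]; ring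
      _ < (((s:ℝ)+1)/2^(m+1)) * 2^(m+1) := by
          apply mul_lt_mul_of_pos_right ht' (by positivity)
      _ = (s:ℝ)+1 := by field_simp
  simp only [fract_lt_half (m-j) (by omega) s _ hx hx']

lemma mod_iff_digit (s i : ℕ) : s % 2^(i+1) < 2^i ↔ s / 2^i % 2 = 0 := by
  have hP : 0 < 2^i := Nat.pow_pos (by norm_num)
  obtain ⟨q, r, hrP, hs⟩ : ∃ q r, r < 2^i ∧ s = 2^i * q + r :=
    ⟨s/2^i, s%2^i, Nat.mod_lt _ hP, (Nat.div_add_mod s (2^i)).symm⟩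
  have hsq : s / 2^i = q := by
    rw [hs, Nat.mul_add_div hP, Nat.div_eq_of_lt hrP, add_zero]
  obtain ⟨Q, B, hB, hq⟩ : ∃ Q B, B < 2 ∧ q = 2*Q + B :=
    ⟨q/2, q%2, Nat.mod_lt _ (by norm_num), (Nat.div_add_mod q 2).symm⟩
  have hdig : s / 2^i % 2 = B := by rw [hsq, hq]; omega
  have hmod : s % 2^(i+1) = 2^i*B + r := by
    have hss : s = 2^(i+1)*Q + (2^i*B + r) := by rw [pow_succ, hs, hq]; ring
    rw [hss, Nat.mul_add_mod]
    apply Nat.mod_eq_of_lt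
    rw [pow_succ]
    rcases (by omega : B = 0 ∨ B = 1) with h|h <;> subst h <;> omega
  rw [hmod, hdig]
  rcases (by omega : B = 0 ∨ B = 1) with h|h <;> subst h <;> omega

lemma integral_eq_sum (m : ℕ) (H : (Fin m → ℝ) → ℝ) :
    (∫ t in (0:ℝ)..1, H (fun j => rademacher (j.1+1) t))
      = ((2:ℝ)^(m+1))⁻¹ * ∑ s ∈ Finset.range (2^(m+1)),
          H (fun j => rademacher (j.1+1) ((s:ℝ)/2^(m+1))) := by
  set g : ℝ → ℝ := fun t => H (fun j => rademacher (j.1+1) t) with hg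
  set aa : ℕ → ℝ := fun s => (s:ℝ) / 2^(m+1) with haa
  have hNR : (0:ℝ) < 2^(m+1) := by positivity
  have hlt : ∀ s : ℕ, aa s < aa (s+1) := by
    intro s
    rw [haa]
    apply div_lt_div_of_pos_right _ hNR
    push_cast
    linarith
  have hconst : ∀ s : ℕ, ∀ t ∈ Set.Ioo (aa s) (aa (s+1)), g t = g (aa s) := by
    intro s t ht
    rw [hg]
    have hup : t < ((s:ℝ)+1)/2^(m+1) := by
      have := ht.2
      rw [haa] at this
      push_cast at this
      exact this
    have hup' : aa s < ((s:ℝ)+1)/2^(m+1) := by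
      have := hlt s
      rw [haa] at this ⊢
      push_cast at this
      exact this
    show H (fun j => rademacher (j.1+1) t) = H (fun j => rademacher (j.1+1) (aa s))
    congr 1
    funext j
    rw [rad_eq m j.1 j.2 s t ht.1.le hup, rad_eq m j.1 j.2 s (aa s) le_rfl hup']
  have hae : ∀ s : ℕ, g =ᵐ[volume.restrict (Set.Ioc (aa s) (aa (s+1)))]
      (fun _ => g (aa s)) := by
    intro s
    rw [← MeasureTheory.restrict_Ioo_eq_restrict_Ioc]
    filter_upwards [ae_restrict_mem measurableSet_Ioo] with t ht using hconst s t ht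
  have hInt : ∀ s : ℕ, IntervalIntegrable g volume (aa s) (aa (s+1)) := by
    intro s
    rw [intervalIntegrable_iff_integrableOn_Ioc_of_le (hlt s).le]
    exact MeasureTheory.Integrable.congr
      (integrableOn_const measure_Ioc_lt_top.ne) (hae s).symm
  have hval : ∀ s : ℕ, (∫ t in (aa s)..(aa (s+1)), g t) = ((2:ℝ)^(m+1))⁻¹ * g (aa s) := by
    intro s
    rw [intervalIntegral.integral_of_le (hlt s).le]
    rw [MeasureTheory.integral_congr_ae (hae s)]
    rw [MeasureTheory.setIntegral_const, measureReal_def, Real.volume_Ioc, smul_eq_mul]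
    congr 1
    rw [ENNReal.toReal_ofReal (by linarith [hlt s])]
    rw [haa]
    push_cast
    field_simp
    ring
  have hsplit := intervalIntegral.sum_integral_adjacent_intervals
    (a := aa) (μ := volume) (f := g) (n := 2^(m+1)) (fun k _ => hInt k)
  have h0 : aa 0 = 0 := by rw [haa]; simp
  have h1 : aa (2^(m+1)) = 1 := by
    rw [haa]
    push_cast
    field_simp
  rw [h0, h1] at hsplit
  rw [← hsplit]
  rw [Finset.sum_congr rfl (fun s _ => hval s), ← Finset.mul_sum]

lemma sum_range_eq (m : ℕ) (H : (Fin m → ℝ) → ℝ) :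
    ∑ s ∈ Finset.range (2^(m+1)), H (fun j => rademacher (j.1+1) ((s:ℝ)/2^(m+1)))
      = 2 * ∑ σ : Fin m → Fin 2, H (fun j => sgn (σ j)) := by
  classical
  set F : ℕ → ℝ := fun s => H (fun j => if s / 2^(m-1-j.1) % 2 = 0 then (1:ℝ) else -1) with hF
  have hstepA : ∀ s : ℕ,
      H (fun j => rademacher (j.1+1) ((s:ℝ)/2^(m+1))) = F s := by
    intro s
    rw [hF]
    congr 1
    funext j
    have hup : (s:ℝ)/2^(m+1) < ((s:ℝ)+1)/2^(m+1) := by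
      apply div_lt_div_of_pos_right _ (by positivity)
      linarith
    rw [rad_eq m j.1 j.2 s _ le_rfl hup]
    have he : m - j.1 = (m - 1 - j.1) + 1 := by omega
    rw [he]
    have he2 : (m - 1 - j.1) + 1 - 1 = m - 1 - j.1 := by omega
    rw [he2]
    simp only [mod_iff_digit s (m - 1 - j.1)]
  rw [Finset.sum_congr rfl (fun s _ => hstepA s)]
  -- split the range
  have h2N : 2^(m+1) = 2^m + 2^m := by rw [pow_succ]; ring
  have hFshift : ∀ u ∈ Finset.range (2^m), F (2^m + u) = F u := by
    intro u _
    show H _ = H _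
    congr 1
    funext j
    have hi : m - 1 - j.1 < m := by omega
    set i := m - 1 - j.1 with hidef
    have hd : (2^m + u) / 2^i % 2 = u / 2^i % 2 := by
      have hsplit2 : 2^m + u = 2^i * 2^(m-i) + u := by
        rw [← pow_add]
        congr 2
        omega
      rw [hsplit2, Nat.mul_add_div (by positivity)]
      have hmi : m - i = (m - i - 1) + 1 := by omega
      rw [hmi, pow_succ]
      rw [show 2^(m-i-1) * 2 + u / 2^i = 2 * 2^(m-i-1) + u / 2^i by ring]
      rw [Nat.mul_add_mod]
    rw [hd]
  rw [h2N, Finset.range_eq_Ico,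
      ← Finset.sum_Ico_consecutive F (m := 0) (n := 2^m) (k := 2^m + 2^m)
        (Nat.zero_le _) (Nat.le_add_right _ _)]
  rw [← Finset.range_eq_Ico]
  rw [Finset.sum_Ico_eq_sum_range]
  have hsub : 2^m + 2^m - 2^m = 2^m := by simp
  rw [hsub]
  rw [Finset.sum_congr rfl (fun u hu => hFshift u hu)]
  have hcube : ∑ u ∈ Finset.range (2^m), F u
      = ∑ σ : Fin m → Fin 2, H (fun j => sgn (σ (Fin.rev j))) := by
    rw [← Fin.sum_univ_eq_sum_range F (2^m)]
    rw [← Equiv.sum_comp (finFunctionFinEquiv (m := 2) (n := m)) (fun x : Fin (2^m) => F x.1)]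
    apply Finset.sum_congr rfl
    intro σ _
    have hdig : ∀ i : Fin m, ((finFunctionFinEquiv σ : Fin (2^m)) : ℕ) / 2^(i:ℕ) % 2 = (σ i : ℕ) := by
      intro i
      have h := finFunctionFinEquiv_symm_apply_val (finFunctionFinEquiv σ) i
      rw [Equiv.symm_apply_apply] at h
      exact h.symm
    have : (fun j : Fin m => if ((finFunctionFinEquiv σ : Fin (2^m)) : ℕ) / 2^(m-1-j.1) % 2 = 0
        then (1:ℝ) else -1) = fun j => sgn (σ (Fin.rev j)) := by
      funext j
      have hrev : ((Fin.rev j : Fin m) : ℕ) = m - 1 - j.1 := by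
        rw [Fin.val_rev]
        omega
      rw [← hrev, hdig (Fin.rev j)]
      rw [sgn]
      by_cases h0 : σ (Fin.rev j) = 0
      · rw [if_pos h0, if_pos (by rw [h0]; rfl)]
      · rw [if_neg h0, if_neg (by
          intro hc
          apply h0
          exact Fin.ext (by simpa using hc))]
    show H _ = H _
    exact congrArg H this
  have hrevsum : ∑ σ : Fin m → Fin 2, H (fun j => sgn (σ (Fin.rev j)))
      = ∑ σ : Fin m → Fin 2, H (fun j => sgn (σ j)) := by
    apply Fintype.sum_equiv (Equiv.arrowCongr Fin.revPerm (Equiv.refl (Fin 2)))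
    intro σ
    congr 1
  rw [hcube, hrevsum, two_mul]

lemma sum_abs_sq {m : ℕ} (c : Fin m → ℂ) :
    ∑ σ : Fin m → Fin 2, ‖∑ j, c j * (sgn (σ j) : ℂ)‖ ^ 2
      = 2^m * ∑ j, ‖c j‖ ^ 2 := by
  have hterm : ∀ σ : Fin m → Fin 2, ‖∑ j, c j * (sgn (σ j) : ℂ)‖ ^ 2
      = (∑ j, (c j).re * sgn (σ j))^2 + (∑ j, (c j).im * sgn (σ j))^2 := by
    intro σ
    rw [Complex.sq_norm, Complex.normSq_apply, Complex.re_sum, Complex.im_sum]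
    rw [Finset.sum_congr rfl (fun j _ => by simp [Complex.mul_re] : ∀ j ∈ Finset.univ,
      (c j * (sgn (σ j):ℂ)).re = (c j).re * sgn (σ j))]
    rw [Finset.sum_congr rfl (fun j _ => by simp [Complex.mul_im] : ∀ j ∈ Finset.univ,
      (c j * (sgn (σ j):ℂ)).im = (c j).im * sgn (σ j))]
    ring
  rw [Finset.sum_congr rfl (fun σ _ => hterm σ), Finset.sum_add_distrib,
    sq_sum (fun j => (c j).re), sq_sum (fun j => (c j).im), ← mul_add]
  congr 1
  rw [← Finset.sum_add_distrib]
  apply Finset.sum_congr rfl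
  intro j _
  rw [Complex.sq_norm, Complex.normSq_apply]
  ring

lemma jensen_avg {ι : Type*} [Fintype ι] [Nonempty ι] (z : ι → ℝ) (hz : ∀ i, 0 ≤ z i)
    {q : ℝ} (hq : 1 ≤ q) :
    (∑ i, z i) / (Fintype.card ι) ≤ ((∑ i, z i ^ q) / (Fintype.card ι)) ^ (1/q) := by
  have hcard : (0:ℝ) < Fintype.card ι := by
    have := Fintype.card_pos (α := ι)
    exact_mod_cast this
  have hw : ∑ _i : ι, ((Fintype.card ι : ℝ))⁻¹ = 1 := by
    rw [Finset.sum_const, Finset.card_univ, nsmul_eq_mul, mul_inv_cancel₀ hcard.ne']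
  have h := Real.arith_mean_le_rpow_mean Finset.univ (fun _ => ((Fintype.card ι:ℝ))⁻¹) z
    (fun i _ => by positivity) hw (fun i _ => hz i) hq
  have e1 : ∑ i, ((Fintype.card ι:ℝ))⁻¹ * z i = (∑ i, z i) / (Fintype.card ι) := by
    rw [← Finset.mul_sum, div_eq_inv_mul]
  have e2 : ∑ i, ((Fintype.card ι:ℝ))⁻¹ * z i ^ q = (∑ i, z i ^ q) / (Fintype.card ι) := by
    rw [← Finset.mul_sum, div_eq_inv_mul]
  rw [e1, e2] at h
  exact h

lemma jensen_avg' {ι : Type*} [Fintype ι] [Nonempty ι] (z : ι → ℝ) (hz : ∀ i, 0 ≤ z i)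
    {q : ℝ} (hq : 1 ≤ q) :
    ((∑ i, z i) / (Fintype.card ι)) ^ q ≤ (∑ i, z i ^ q) / (Fintype.card ι) := by
  have hcard : (0:ℝ) < Fintype.card ι := by
    have := Fintype.card_pos (α := ι)
    exact_mod_cast this
  have hw : ∑ _i : ι, ((Fintype.card ι : ℝ))⁻¹ = 1 := by
    rw [Finset.sum_const, Finset.card_univ, nsmul_eq_mul, mul_inv_cancel₀ hcard.ne']
  have h := Real.rpow_arith_mean_le_arith_mean_rpow Finset.univ
    (fun _ => ((Fintype.card ι:ℝ))⁻¹) z (fun i _ => by positivity) hw (fun i _ => hz i) hq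
  have e1 : ∑ i, ((Fintype.card ι:ℝ))⁻¹ * z i = (∑ i, z i) / (Fintype.card ι) := by
    rw [← Finset.mul_sum, div_eq_inv_mul]
  have e2 : ∑ i, ((Fintype.card ι:ℝ))⁻¹ * z i ^ q = (∑ i, z i ^ q) / (Fintype.card ι) := by
    rw [← Finset.mul_sum, div_eq_inv_mul]
  rw [e1, e2] at h
  exact h


lemma integral_eq_avg (m : ℕ) (c : Fin m → ℂ) (p : ℝ) :
    (∫ t in (0:ℝ)..1, ‖∑ j : Fin m, c j * ((rademacher (j.1 + 1) t : ℝ) : ℂ)‖ ^ p)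
      = (∑ σ : Fin m → Fin 2, ‖∑ j, c j * ((sgn (σ j) : ℝ) : ℂ)‖ ^ p) / 2^m := by
  have h1 := integral_eq_sum m (fun v => ‖∑ j : Fin m, c j * ((v j : ℝ) : ℂ)‖ ^ p)
  have h2 := sum_range_eq m (fun v => ‖∑ j : Fin m, c j * ((v j : ℝ) : ℂ)‖ ^ p)
  rw [h2] at h1
  rw [h1, pow_succ]
  field_simp

end Stmt19

set_option maxHeartbeats 2000000 in
/-- Khinchine's inequality. -/
theorem stmt_19 (p : ℝ) (hp : 0 < p) :
    ∃ A B : ℝ, 0 < A ∧ A ≤ B ∧ ∀ (m : ℕ) (c : Fin m → ℂ),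
      A * (∑ j, ‖c j‖ ^ 2) ^ (p / 2) ≤
        (∫ t in (0 : ℝ)..1,
          ‖∑ j : Fin m, c j * ((rademacher (j.val + 1) t : ℝ) : ℂ)‖ ^ p) ∧
      (∫ t in (0 : ℝ)..1,
          ‖∑ j : Fin m, c j * ((rademacher (j.val + 1) t : ℝ) : ℂ)‖ ^ p) ≤
        B * (∑ j, ‖c j‖ ^ 2) ^ (p / 2) := by
  classical
  obtain ⟨k, hk1, hkp⟩ : ∃ k : ℕ, 1 ≤ k ∧ p ≤ 2*(k:ℝ) := by
    refine ⟨max 1 ⌈p/2⌉₊, le_max_left _ _, ?_⟩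
    have h1 : p/2 ≤ (⌈p/2⌉₊ : ℝ) := Nat.le_ceil _
    have h2 : ((⌈p/2⌉₊:ℕ):ℝ) ≤ ((max 1 ⌈p/2⌉₊ : ℕ):ℝ) := by
      exact_mod_cast le_max_right 1 ⌈p/2⌉₊
    linarith
  have hkR : (0:ℝ) < (k:ℝ) := by exact_mod_cast hk1
  set CCk : ℝ := 2^(k+1) * Stmt19.D k with hCCk
  set CC2 : ℝ := 2^(2+1) * Stmt19.D 2 with hCC2
  have hCCkpos : 0 < CCk := by
    have := Stmt19.D_pos k
    positivity
  have hCC2pos : 0 < CC2 := by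
    have := Stmt19.D_pos 2
    positivity
  set A : ℝ := min 1 (CC2 ^ (-(4-p)/4)) with hA
  set B : ℝ := max 1 (CCk ^ (p/(2*(k:ℝ)))) with hB
  have hApos : 0 < A := lt_min one_pos (Real.rpow_pos_of_pos hCC2pos _)
  have hA1 : A ≤ 1 := min_le_left _ _
  have hB1 : 1 ≤ B := le_max_left _ _
  refine ⟨A, B, hApos, le_trans hA1 hB1, ?_⟩
  intro m c
  rw [Stmt19.integral_eq_avg m c p]
  set S : ℝ := ∑ j, ‖c j‖^2 with hS
  have hS0 : 0 ≤ S := Finset.sum_nonneg (fun j _ => by positivity)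
  have hSp0 : 0 ≤ S ^ (p/2) := Real.rpow_nonneg hS0 _
  have hM : (0:ℝ) < 2^m := by positivity
  set x : (Fin m → Fin 2) → ℝ :=
    fun σ => ‖∑ j, c j * ((Stmt19.sgn (σ j) : ℝ) : ℂ)‖ with hx
  have hx0 : ∀ σ, 0 ≤ x σ := fun σ => norm_nonneg _
  have hcard : ((Fintype.card (Fin m → Fin 2)) : ℝ) = 2^m := by
    simp [Fintype.card_fun]
  set P : ℝ := ∑ σ : Fin m → Fin 2, x σ ^ p with hP
  have hP0 : 0 ≤ P := Finset.sum_nonneg (fun σ _ => Real.rpow_nonneg (hx0 σ) _)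
  have hE2 : ∑ σ : Fin m → Fin 2, (x σ)^(2:ℕ) = 2^m * S := by
    simp only [hx]
    exact Stmt19.sum_abs_sq c
  have hE2' : (∑ σ : Fin m → Fin 2, x σ ^ ((2:ℕ):ℝ)) = 2^m * S := by
    rw [← hE2]
    exact Finset.sum_congr rfl (fun σ _ => Real.rpow_natCast (x σ) 2)
  have hE4 : (∑ σ : Fin m → Fin 2, x σ ^ ((4:ℕ):ℝ)) ≤ 2^m * (CC2 * S^(2:ℕ)) := by
    have h := Stmt19.moment_complex m 2 c
    calc (∑ σ : Fin m → Fin 2, x σ ^ ((4:ℕ):ℝ))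
        = ∑ σ : Fin m → Fin 2, x σ ^ (2*2:ℕ) := by
          exact Finset.sum_congr rfl (fun σ _ => by
            rw [Real.rpow_natCast (x σ)])
      _ ≤ 2^m * (CC2 * S^(2:ℕ)) := h
  have hE2k : (∑ σ : Fin m → Fin 2, x σ ^ (2*(k:ℝ))) ≤ 2^m * (CCk * S^k) := by
    have h := Stmt19.moment_complex m k c
    calc (∑ σ : Fin m → Fin 2, x σ ^ (2*(k:ℝ)))
        = ∑ σ : Fin m → Fin 2, x σ ^ (2*k:ℕ) := by
          refine Finset.sum_congr rfl (fun σ _ => ?_)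
          rw [← Real.rpow_natCast (x σ) (2*k)]
          congr 1
          push_cast
          ring
      _ ≤ 2^m * (CCk * S^k) := h
  constructor
  · -- LOWER BOUND
    by_cases hS00 : S = 0
    · rw [hS00, Real.zero_rpow (by positivity : p/2 ≠ 0), mul_zero]
      exact div_nonneg hP0 hM.le
    · have hSpos : 0 < S := lt_of_le_of_ne hS0 (Ne.symm hS00)
      by_cases hp2 : p ≤ 2
      · -- Cauchy-Schwarz route, p ≤ 2
        have h4p : (0:ℝ) < 4 - p := by linarith
        set f : (Fin m → Fin 2) → ℝ := fun σ => x σ ^ (p/2) with hf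
        set g : (Fin m → Fin 2) → ℝ := fun σ => x σ ^ ((4-p)/2) with hg
        have hCS := Finset.sum_mul_sq_le_sq_mul_sq Finset.univ f g
        have hfg : ∀ σ, f σ * g σ = x σ ^ ((2:ℕ):ℝ) := by
          intro σ
          rw [hf, hg, ← Real.rpow_add' (hx0 σ) (by
            rw [(by ring : p/2 + (4-p)/2 = (2:ℝ))]
            norm_num)]
          congr 1
          push_cast
          ring
        have hf2 : ∀ σ, f σ ^ (2:ℕ) = x σ ^ p := by
          intro σ
          rw [hf, ← Real.rpow_natCast (x σ ^ (p/2)) 2, ← Real.rpow_mul (hx0 σ)]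
          congr 1
          push_cast
          ring
        have hg2 : ∀ σ, g σ ^ (2:ℕ) = x σ ^ ((4:ℝ)-p) := by
          intro σ
          rw [hg, ← Real.rpow_natCast (x σ ^ ((4-p)/2)) 2, ← Real.rpow_mul (hx0 σ)]
          congr 1
          push_cast
          ring
        rw [Finset.sum_congr rfl (fun σ _ => hfg σ),
            Finset.sum_congr rfl (fun σ _ => hf2 σ),
            Finset.sum_congr rfl (fun σ _ => hg2 σ), hE2'] at hCS
        -- hCS : (2^m*S)^2 ≤ P * ∑ x^(4-p)
        set G : ℝ := ∑ σ : Fin m → Fin 2, x σ ^ ((4:ℝ)-p) with hGdef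
        have hq2 : 1 ≤ 4/(4-p) := by
          rw [le_div_iff₀ h4p]
          linarith
        have hjG := Stmt19.jensen_avg (ι := Fin m → Fin 2)
          (fun σ => x σ ^ ((4:ℝ)-p)) (fun σ => Real.rpow_nonneg (hx0 σ) _) hq2
        rw [hcard] at hjG
        have hzq : ∀ σ : Fin m → Fin 2, (x σ ^ ((4:ℝ)-p)) ^ (4/(4-p)) = x σ ^ ((4:ℕ):ℝ) := by
          intro σ
          rw [← Real.rpow_mul (hx0 σ)]
          congr 1
          push_cast
          field_simp
        rw [Finset.sum_congr rfl (fun σ _ => hzq σ)] at hjG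
        have h1q2 : 1/(4/(4-p)) = (4-p)/4 := one_div_div _ _
        rw [h1q2] at hjG
        set W : ℝ := (CC2 * S^(2:ℕ)) ^ ((4-p)/4) with hW
        have hWpos : 0 < W := by
          apply Real.rpow_pos_of_pos
          positivity
        have hjG2 : G / 2^m ≤ W := by
          refine le_trans hjG ?_
          rw [hW]
          apply Real.rpow_le_rpow (by positivity) _ (by positivity)
          rw [div_le_iff₀ hM]
          calc (∑ σ : Fin m → Fin 2, x σ ^ ((4:ℕ):ℝ)) ≤ 2^m * (CC2 * S^(2:ℕ)) := hE4
            _ = CC2 * S^(2:ℕ) * 2^m := by ring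
        have hGle : G ≤ 2^m * W := by
          rw [← div_le_iff₀' hM]
          exact hjG2
        have hkey : 2^m * S^(2:ℕ) ≤ P * W := by
          have hstep : (2^m*S)^(2:ℕ) ≤ P * (2^m * W) := by
            calc (2^m*S)^(2:ℕ) ≤ P * G := hCS
              _ ≤ P * (2^m * W) := mul_le_mul_of_nonneg_left hGle hP0
          have hstep2 : (2^m * S^(2:ℕ)) * 2^m ≤ (P * W) * 2^m := by
            calc (2^m * S^(2:ℕ)) * 2^m = (2^m*S)^(2:ℕ) := by ring
              _ ≤ P * (2^m * W) := hstep
              _ = (P * W) * 2^m := by ring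
          exact le_of_mul_le_mul_right hstep2 hM
        have hdiv : S^(2:ℕ) / W ≤ P / 2^m := by
          rw [div_le_div_iff₀ hWpos hM]
          calc S^(2:ℕ) * 2^m = 2^m * S^(2:ℕ) := by ring
            _ ≤ P * W := hkey
        refine le_trans ?_ hdiv
        -- A * S^(p/2) ≤ S^2 / W
        have hid : S^(2:ℕ) / W = CC2 ^ (-(4-p)/4) * S^(p/2) := by
          rw [hW]
          rw [Real.mul_rpow hCC2pos.le (sq_nonneg S)]
          have hSsq : (S^(2:ℕ)) ^ ((4-p)/4) = S ^ ((4-p)/2) := by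
            rw [← Real.rpow_natCast S 2, ← Real.rpow_mul hS0]
            congr 1
            push_cast
            ring
          rw [hSsq]
          have hs2 : S^(2:ℕ) = S^((4-p)/2) * S^(p/2) := by
            rw [← Real.rpow_natCast S 2, ← Real.rpow_add hSpos]
            congr 1
            push_cast
            ring
          rw [hs2]
          have hCneg : CC2^(-(4-p)/4) = (CC2^((4-p)/4))⁻¹ := by
            rw [neg_div, Real.rpow_neg hCC2pos.le]
          rw [hCneg]
          have h1 : 0 < S^((4-p)/2) := Real.rpow_pos_of_pos hSpos _
          have h2 : 0 < CC2^((4-p)/4) := Real.rpow_pos_of_pos hCC2pos _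
          field_simp
        rw [hid]
        exact mul_le_mul_of_nonneg_right (min_le_right _ _) hSp0
      · -- Jensen route, p ≥ 2
        push_neg at hp2
        have hq : 1 ≤ p/2 := by linarith
        have hj := Stmt19.jensen_avg' (ι := Fin m → Fin 2)
          (fun σ => x σ ^ ((2:ℕ):ℝ)) (fun σ => Real.rpow_nonneg (hx0 σ) _) hq
        rw [hcard, hE2'] at hj
        have hzq : ∀ σ : Fin m → Fin 2, (x σ ^ ((2:ℕ):ℝ)) ^ (p/2) = x σ ^ p := by
          intro σ
          rw [← Real.rpow_mul (hx0 σ)]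
          congr 1
          push_cast
          ring
        rw [Finset.sum_congr rfl (fun σ _ => hzq σ)] at hj
        have hcancel : (2^m * S) / 2^m = S := by field_simp
        rw [hcancel] at hj
        calc A * S^(p/2) ≤ 1 * S^(p/2) := mul_le_mul_of_nonneg_right hA1 hSp0
          _ = S^(p/2) := one_mul _
          _ ≤ P / 2^m := hj
  · -- UPPER BOUND
    by_cases hp2 : p ≤ 2
    · have hq : 1 ≤ 2/p := by
        rw [le_div_iff₀ hp]
        linarith
      have hj := Stmt19.jensen_avg (ι := Fin m → Fin 2)
        (fun σ => x σ ^ p) (fun σ => Real.rpow_nonneg (hx0 σ) _) hq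
      rw [hcard] at hj
      have hzq : ∀ σ : Fin m → Fin 2, (x σ ^ p) ^ (2/p) = x σ ^ ((2:ℕ):ℝ) := by
        intro σ
        rw [← Real.rpow_mul (hx0 σ)]
        congr 1
        push_cast
        field_simp
      rw [Finset.sum_congr rfl (fun σ _ => hzq σ), hE2'] at hj
      have hcancel : (2^m * S) / 2^m = S := by field_simp
      rw [hcancel] at hj
      have h1q : 1/(2/p) = p/2 := one_div_div _ _
      rw [h1q] at hj
      calc P / 2^m ≤ S^(p/2) := hj
        _ ≤ B * S^(p/2) := le_mul_of_one_le_left hSp0 hB1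
    · push_neg at hp2
      have hq : 1 ≤ 2*(k:ℝ)/p := by
        rw [le_div_iff₀ hp]
        linarith
      have hj := Stmt19.jensen_avg (ι := Fin m → Fin 2)
        (fun σ => x σ ^ p) (fun σ => Real.rpow_nonneg (hx0 σ) _) hq
      rw [hcard] at hj
      have hzq : ∀ σ : Fin m → Fin 2, (x σ ^ p) ^ (2*(k:ℝ)/p) = x σ ^ (2*(k:ℝ)) := by
        intro σ
        rw [← Real.rpow_mul (hx0 σ)]
        congr 1
        field_simp
      rw [Finset.sum_congr rfl (fun σ _ => hzq σ)] at hj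
      have h1q : 1/(2*(k:ℝ)/p) = p/(2*(k:ℝ)) := one_div_div _ _
      rw [h1q] at hj
      have hmid : ((∑ σ : Fin m → Fin 2, x σ ^ (2*(k:ℝ))) / 2^m) ^ (p/(2*(k:ℝ)))
          ≤ (CCk * S^k) ^ (p/(2*(k:ℝ))) := by
        apply Real.rpow_le_rpow (by positivity) _ (by positivity)
        rw [div_le_iff₀ hM]
        calc (∑ σ : Fin m → Fin 2, x σ ^ (2*(k:ℝ))) ≤ 2^m * (CCk * S^k) := hE2k
          _ = CCk * S^k * 2^m := by ring
      have hsplit : (CCk * S^k) ^ (p/(2*(k:ℝ)))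
          = CCk ^ (p/(2*(k:ℝ))) * S^(p/2) := by
        rw [Real.mul_rpow hCCkpos.le (by positivity)]
        congr 1
        rw [← Real.rpow_natCast S k, ← Real.rpow_mul hS0]
        congr 1
        field_simp
      calc P / 2^m ≤ (CCk * S^k) ^ (p/(2*(k:ℝ))) := le_trans hj hmid
        _ = CCk ^ (p/(2*(k:ℝ))) * S^(p/2) := hsplit
        _ ≤ B * S^(p/2) := mul_le_mul_of_nonneg_right (le_max_right _ _) hSp0
end
end
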